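/- For every natural number k ≥ 1, there is a Boolean function f on (4k+2)(3k+2) variables with sensitivity s(f) = 3k+2 and block sensitivity bs(f) = (3k+2)(2k+1). Concretely, f is defined on (3k+2) blocks of n = 4k+2 variables each by f = ⋁_{i=1}^{3k+2} g(x_{i,1},…,x_{i,n}), where g : {0,1}^n → {0,1} is the pattern function: g(x) = 1 iff there exists j ∈ [2k+1] such that x_{2j-1} = x_{2j} = 1 and, for all i ∈ [k], x_{2j+2i} = 0 and x_{2j-2i-1} = x_{2j-2i} = 0 (indices modulo n). -/

import Mathlib

section Defs

variable {ι : Type} [Fintype ι] [DecidableEq ι]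

/-- `flipBit x i` is `x` with its `i`-th bit flipped. -/
def flipBit (x : ι → Bool) (i : ι) : ι → Bool :=
  Function.update x i (!x i)

/-- `flipBlock x B` is `x` with all bits indexed by `B` flipped. -/
def flipBlock (x : ι → Bool) (B : Finset ι) : ι → Bool :=
  fun j => if j ∈ B then !x j else x j

/-- The sensitivity of `f` at `x`: the number of `i` with `f (x^(i)) ≠ f x`. -/
def sensAt (f : (ι → Bool) → Bool) (x : ι → Bool) : ℕ :=
  (Finset.univ.filter fun i => f (flipBit x i) ≠ f x).card

/-- The sensitivity `s(f) = max_x s(f,x)`. -/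
def sens (f : (ι → Bool) → Bool) : ℕ :=
  Finset.univ.sup (sensAt f)

/-- The 0-sensitivity `s₀(f) = max_{x : f x = 0} s(f,x)`. -/
def sens0 (f : (ι → Bool) → Bool) : ℕ :=
  (Finset.univ.filter fun x => f x = false).sup (sensAt f)

/-- The 1-sensitivity `s₁(f) = max_{x : f x = 1} s(f,x)`. -/
def sens1 (f : (ι → Bool) → Bool) : ℕ :=
  (Finset.univ.filter fun x => f x = true).sup (sensAt f)

/-- The block sensitivity of `f` at `x`: the largest `b` such that there are
`b` pairwise disjoint blocks on which flipping `x` changes the value of `f`. -/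
noncomputable def bsAt (f : (ι → Bool) → Bool) (x : ι → Bool) : ℕ :=
  sSup {b : ℕ | ∃ Bl : Fin b → Finset ι,
    (Pairwise fun p q => Disjoint (Bl p) (Bl q)) ∧
    ∀ p, f (flipBlock x (Bl p)) ≠ f x}

/-- The block sensitivity `bs(f) = max_x bs(f,x)`. -/
noncomputable def bs (f : (ι → Bool) → Bool) : ℕ :=
  Finset.univ.sup (bsAt f)

/-- The 0-block-sensitivity `bs₀(f) = max_{x : f x = 0} bs(f,x)`. -/
noncomputable def bs0 (f : (ι → Bool) → Bool) : ℕ :=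
  (Finset.univ.filter fun x => f x = false).sup (bsAt f)

end Defs

/-- The coordinate of `{0,1}^{4k+2}` with (1-based) index `t`, taken modulo `4k+2`. -/
def pidx (k : ℕ) (t : ℤ) : Fin (4*k+2) :=
  ⟨(t % (4*(k:ℤ)+2)).toNat, by
    have h0 : (0:ℤ) < 4*(k:ℤ)+2 := by positivity
    have h1 := Int.emod_nonneg t (ne_of_gt h0)
    have h2 := Int.emod_lt_of_pos t h0
    omega⟩

/-- `x` satisfies the pattern `P_j`: `x_{2j-1} = x_{2j} = 1` and, for all `i ∈ [k]`,
`x_{2j+2i} = 0` and `x_{2j-2i-1} = x_{2j-2i} = 0`, indices taken modulo `4k+2`. -/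
def SatPat (k : ℕ) (j : ℤ) (x : Fin (4*k+2) → Bool) : Prop :=
  x (pidx k (2*j-1)) = true ∧ x (pidx k (2*j)) = true ∧
  ∀ i : ℤ, 1 ≤ i → i ≤ (k:ℤ) →
    x (pidx k (2*j+2*i)) = false ∧
    x (pidx k (2*j-2*i-1)) = false ∧
    x (pidx k (2*j-2*i)) = false

lemma pidx_eq_iff (k : ℕ) (a b : ℤ) : pidx k a = pidx k b ↔ (4*(k:ℤ)+2) ∣ (b - a) := by
  have h0 : (0:ℤ) < 4*(k:ℤ)+2 := by positivity
  have h1 := Int.emod_nonneg a (ne_of_gt h0)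
  have h2 := Int.emod_nonneg b (ne_of_gt h0)
  have key : pidx k a = pidx k b ↔ a % (4*(k:ℤ)+2) = b % (4*(k:ℤ)+2) := by
    constructor
    · intro h
      have := congrArg Fin.val h
      simp only [pidx] at this
      omega
    · intro h
      apply Fin.ext
      simp only [pidx]
      omega
  rw [key, Int.emod_eq_emod_iff_emod_sub_eq_zero, ← dvd_sub_comm]
  exact ⟨Int.dvd_of_emod_eq_zero, Int.emod_eq_zero_of_dvd⟩

lemma ndvd (k : ℕ) (d : ℤ) (h1 : d ≠ 0) (h2 : -(4*(k:ℤ)+2) < d) (h3 : d < 4*(k:ℤ)+2) :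
    ¬ (4*(k:ℤ)+2) ∣ d :=
  fun h => h1 (Int.eq_zero_of_abs_lt_dvd h (abs_lt.mpr ⟨h2, h3⟩))

lemma pidx_ne (k : ℕ) (a b : ℤ) (h1 : b - a ≠ 0) (h2 : -(4*(k:ℤ)+2) < b - a)
    (h3 : b - a < 4*(k:ℤ)+2) : pidx k a ≠ pidx k b := by
  rw [Ne, pidx_eq_iff]; exact ndvd k _ h1 h2 h3

lemma pidx_even_ne_odd (k : ℕ) (a b : ℤ) : pidx k (2*a) ≠ pidx k (2*b-1) := by
  rw [Ne, pidx_eq_iff]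
  intro h
  have h2 : (2:ℤ) ∣ (2*b-1 - 2*a) := dvd_trans ⟨2*(k:ℤ)+1, by ring⟩ h
  omega

/-- the set of positions constrained by pattern `P_j`. -/
noncomputable def Sset (k : ℕ) (j : ℤ) : Finset (Fin (4*k+2)) :=
  (({pidx k (2*j-1), pidx k (2*j)} ∪
    (Finset.Icc (1:ℤ) k).image (fun i => pidx k (2*j+2*i))) ∪
    (Finset.Icc (1:ℤ) k).image (fun i => pidx k (2*j-2*i-1))) ∪
    (Finset.Icc (1:ℤ) k).image (fun i => pidx k (2*j-2*i))

/-- the prescribed value of pattern `P_j` at position `p`. -/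
def patval (k : ℕ) (j : ℤ) (p : Fin (4*k+2)) : Bool :=
  decide (p = pidx k (2*j-1) ∨ p = pidx k (2*j))

lemma Sset_card (k : ℕ) (j : ℤ) : (Sset k j).card ≤ 3*k+2 := by
  have hI : (Finset.Icc (1:ℤ) k).card = k := by
    rw [Int.card_Icc]; omega
  have i1 : ((Finset.Icc (1:ℤ) k).image (fun i => pidx k (2*j+2*i))).card ≤ k :=
    (Finset.card_image_le).trans hI.le
  have i2 : ((Finset.Icc (1:ℤ) k).image (fun i => pidx k (2*j-2*i-1))).card ≤ k :=
    (Finset.card_image_le).trans hI.le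
  have i3 : ((Finset.Icc (1:ℤ) k).image (fun i => pidx k (2*j-2*i))).card ≤ k :=
    (Finset.card_image_le).trans hI.le
  have i0 : ({pidx k (2*j-1), pidx k (2*j)} : Finset (Fin (4*k+2))).card ≤ 2 :=
    (Finset.card_insert_le _ _).trans (by simp)
  have u1 := Finset.card_union_le ({pidx k (2*j-1), pidx k (2*j)} : Finset (Fin (4*k+2)))
    ((Finset.Icc (1:ℤ) k).image (fun i => pidx k (2*j+2*i)))
  have u2 := Finset.card_union_le (({pidx k (2*j-1), pidx k (2*j)} : Finset (Fin (4*k+2))) ∪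
    (Finset.Icc (1:ℤ) k).image (fun i => pidx k (2*j+2*i)))
    ((Finset.Icc (1:ℤ) k).image (fun i => pidx k (2*j-2*i-1)))
  have u3 := Finset.card_union_le ((({pidx k (2*j-1), pidx k (2*j)} : Finset (Fin (4*k+2))) ∪
    (Finset.Icc (1:ℤ) k).image (fun i => pidx k (2*j+2*i))) ∪
    (Finset.Icc (1:ℤ) k).image (fun i => pidx k (2*j-2*i-1)))
    ((Finset.Icc (1:ℤ) k).image (fun i => pidx k (2*j-2*i)))
  simp only [Sset]
  omega

lemma mem_Sset_one1 (k : ℕ) (j : ℤ) : pidx k (2*j-1) ∈ Sset k j := by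
  simp [Sset]

lemma mem_Sset_one2 (k : ℕ) (j : ℤ) : pidx k (2*j) ∈ Sset k j := by
  simp [Sset]

lemma mem_Sset_z1 (k : ℕ) (j i : ℤ) (h1 : 1 ≤ i) (h2 : i ≤ (k:ℤ)) :
    pidx k (2*j+2*i) ∈ Sset k j := by
  simp only [Sset, Finset.mem_union]
  exact Or.inl (Or.inl (Or.inr (Finset.mem_image.mpr ⟨i, Finset.mem_Icc.mpr ⟨h1, h2⟩, rfl⟩)))

lemma mem_Sset_z2 (k : ℕ) (j i : ℤ) (h1 : 1 ≤ i) (h2 : i ≤ (k:ℤ)) :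
    pidx k (2*j-2*i-1) ∈ Sset k j := by
  simp only [Sset, Finset.mem_union]
  exact Or.inl (Or.inr (Finset.mem_image.mpr ⟨i, Finset.mem_Icc.mpr ⟨h1, h2⟩, rfl⟩))

lemma mem_Sset_z3 (k : ℕ) (j i : ℤ) (h1 : 1 ≤ i) (h2 : i ≤ (k:ℤ)) :
    pidx k (2*j-2*i) ∈ Sset k j := by
  simp only [Sset, Finset.mem_union]
  exact Or.inr (Finset.mem_image.mpr ⟨i, Finset.mem_Icc.mpr ⟨h1, h2⟩, rfl⟩)

lemma pv1 (k : ℕ) (j : ℤ) : patval k j (pidx k (2*j-1)) = true := by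
  simp [patval]

lemma pv2 (k : ℕ) (j : ℤ) : patval k j (pidx k (2*j)) = true := by
  simp [patval]

lemma pvz1 (k : ℕ) (j i : ℤ) (h1 : 1 ≤ i) (h2 : i ≤ (k:ℤ)) :
    patval k j (pidx k (2*j+2*i)) = false := by
  simp only [patval, decide_eq_false_iff_not, not_or]
  exact ⟨pidx_ne k _ _ (by omega) (by omega) (by omega),
         pidx_ne k _ _ (by omega) (by omega) (by omega)⟩

lemma pvz2 (k : ℕ) (j i : ℤ) (h1 : 1 ≤ i) (h2 : i ≤ (k:ℤ)) :
    patval k j (pidx k (2*j-2*i-1)) = false := by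
  simp only [patval, decide_eq_false_iff_not, not_or]
  exact ⟨pidx_ne k _ _ (by omega) (by omega) (by omega),
         pidx_ne k _ _ (by omega) (by omega) (by omega)⟩

lemma pvz3 (k : ℕ) (j i : ℤ) (h1 : 1 ≤ i) (h2 : i ≤ (k:ℤ)) :
    patval k j (pidx k (2*j-2*i)) = false := by
  simp only [patval, decide_eq_false_iff_not, not_or]
  exact ⟨pidx_ne k _ _ (by omega) (by omega) (by omega),
         pidx_ne k _ _ (by omega) (by omega) (by omega)⟩

lemma satPat_iff (k : ℕ) (j : ℤ) (x : Fin (4*k+2) → Bool) :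
    SatPat k j x ↔ ∀ p ∈ Sset k j, x p = patval k j p := by
  constructor
  · rintro ⟨h1, h2, h3⟩ p hp
    simp only [Sset, Finset.mem_union, Finset.mem_insert, Finset.mem_singleton,
      Finset.mem_image, Finset.mem_Icc] at hp
    rcases hp with (((rfl|rfl)|⟨i,⟨hi1,hi2⟩,rfl⟩)|⟨i,⟨hi1,hi2⟩,rfl⟩)|⟨i,⟨hi1,hi2⟩,rfl⟩
    · rw [h1, pv1]
    · rw [h2, pv2]
    · rw [(h3 i hi1 hi2).1, pvz1 k j i hi1 hi2]
    · rw [(h3 i hi1 hi2).2.1, pvz2 k j i hi1 hi2]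
    · rw [(h3 i hi1 hi2).2.2, pvz3 k j i hi1 hi2]
  · intro h
    refine ⟨?_, ?_, fun i hi1 hi2 => ⟨?_, ?_, ?_⟩⟩
    · rw [h _ (mem_Sset_one1 k j), pv1]
    · rw [h _ (mem_Sset_one2 k j), pv2]
    · rw [h _ (mem_Sset_z1 k j i hi1 hi2), pvz1 k j i hi1 hi2]
    · rw [h _ (mem_Sset_z2 k j i hi1 hi2), pvz2 k j i hi1 hi2]
    · rw [h _ (mem_Sset_z3 k j i hi1 hi2), pvz3 k j i hi1 hi2]

/-- congruence of SatPat on the constrained set -/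
lemma satPat_congr (k : ℕ) (j : ℤ) (x y : Fin (4*k+2) → Bool)
    (h : ∀ p ∈ Sset k j, x p = y p) (hy : SatPat k j y) : SatPat k j x := by
  rw [satPat_iff] at hy ⊢
  exact fun p hp => (h p hp).trans (hy p hp)

/-- a 0-input which becomes a 1-input after one flip is at distance one from the pattern -/
lemma dist1 (k : ℕ) (j : ℤ) (x : Fin (4*k+2) → Bool) (t : Fin (4*k+2))
    (hx : ¬ SatPat k j x) (h : SatPat k j (flipBit x t)) :
    t ∈ Sset k j ∧ x t = !(patval k j t) ∧
      ∀ p ∈ Sset k j, p ≠ t → x p = patval k j p := by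
  rw [satPat_iff] at h
  have hne : ∀ p ∈ Sset k j, p ≠ t → x p = patval k j p := by
    intro p hp hpt
    have := h p hp
    rwa [flipBit, Function.update_of_ne hpt] at this
  have ht : t ∈ Sset k j := by
    by_contra hts
    exact hx ((satPat_iff k j x).mpr fun p hp =>
      hne p hp (fun he => hts (he ▸ hp)))
  have := h t ht
  rw [flipBit, Function.update_self] at this
  refine ⟨ht, ?_, hne⟩
  cases hxt : x t <;> rw [hxt] at this <;> simp [← this]

/-- every even position is constrained by every pattern -/
lemma even_mem_Sset (k : ℕ) (hk : 1 ≤ k) (j b : ℤ) : pidx k (2*b) ∈ Sset k j := by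
  set q := (b - j) / (2*(k:ℤ)+1) with hq
  set d := (b - j) % (2*(k:ℤ)+1) with hd
  have hqd : b - j = (2*(k:ℤ)+1) * q + d := (Int.mul_ediv_add_emod _ _).symm
  have hd0 : 0 ≤ d := Int.emod_nonneg _ (by positivity)
  have hd1 : d < 2*(k:ℤ)+1 := Int.emod_lt_of_pos _ (by positivity)
  rcases lt_trichotomy d 0 with h | h | h
  · omega
  · have : pidx k (2*b) = pidx k (2*j) := by
      rw [pidx_eq_iff]; exact ⟨-q, by linarith⟩
    rw [this]; exact mem_Sset_one2 k j
  · rcases le_or_gt d k with h2 | h2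
    · have : pidx k (2*b) = pidx k (2*j+2*d) := by
        rw [pidx_eq_iff]; exact ⟨-q, by linarith⟩
      rw [this]; exact mem_Sset_z1 k j d h h2
    · have : pidx k (2*b) = pidx k (2*j-2*(2*(k:ℤ)+1-d)) := by
        rw [pidx_eq_iff]; exact ⟨-q-1, by linarith⟩
      rw [this]; exact mem_Sset_z3 k j _ (by omega) (by omega)

/-- trichotomy for odd positions relative to pattern `j` -/
lemma odd_tri (k : ℕ) (hk : 1 ≤ k) (j b : ℤ) :
    pidx k (2*b-1) = pidx k (2*j-1) ∨
    (∃ i : ℤ, 1 ≤ i ∧ i ≤ (k:ℤ) ∧ pidx k (2*b-1) = pidx k (2*j+2*i-1)) ∨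
    (∃ i : ℤ, 1 ≤ i ∧ i ≤ (k:ℤ) ∧ pidx k (2*b-1) = pidx k (2*j-2*i-1)) := by
  set q := (b - j) / (2*(k:ℤ)+1) with hq
  set d := (b - j) % (2*(k:ℤ)+1) with hd
  have hqd : b - j = (2*(k:ℤ)+1) * q + d := (Int.mul_ediv_add_emod _ _).symm
  have hd0 : 0 ≤ d := Int.emod_nonneg _ (by positivity)
  have hd1 : d < 2*(k:ℤ)+1 := Int.emod_lt_of_pos _ (by positivity)
  rcases lt_trichotomy d 0 with h | h | h
  · omega
  · exact Or.inl (by rw [pidx_eq_iff]; exact ⟨-q, by linarith⟩)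
  · rcases le_or_gt d k with h2 | h2
    · exact Or.inr (Or.inl ⟨d, h, h2, by rw [pidx_eq_iff]; exact ⟨-q, by linarith⟩⟩)
    · exact Or.inr (Or.inr ⟨2*(k:ℤ)+1-d, by omega, by omega,
        by rw [pidx_eq_iff]; exact ⟨-q-1, by linarith⟩⟩)

lemma pv_even (k : ℕ) (j b : ℤ) (h : ¬ (4*(k:ℤ)+2) ∣ (2*j - 2*b)) :
    patval k j (pidx k (2*b)) = false := by
  simp only [patval, decide_eq_false_iff_not, not_or]
  refine ⟨pidx_even_ne_odd k b j, ?_⟩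
  intro hd
  rw [pidx_eq_iff] at hd
  exact h (by have heq : 2*j - 2*b = 2*j - 2*b := rfl; exact hd)

/-- core: a 0-input of the pattern function has at most one sensitive bit -/
lemma s0_core (k : ℕ) (hk : 1 ≤ k) (x : Fin (4*k+2) → Bool)
    (hx : ∀ j : ℤ, 1 ≤ j → j ≤ 2*(k:ℤ)+1 → ¬ SatPat k j x)
    (t t' : Fin (4*k+2)) (j j' : ℤ)
    (hj1 : 1 ≤ j) (hj2 : j ≤ 2*(k:ℤ)+1) (hj1' : 1 ≤ j') (hj2' : j' ≤ 2*(k:ℤ)+1)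
    (h : SatPat k j (flipBit x t)) (h' : SatPat k j' (flipBit x t')) : t = t' := by
  by_contra hne
  obtain ⟨ht, hxt, hm⟩ := dist1 k j x t (hx j hj1 hj2) h
  obtain ⟨ht', hxt', hm'⟩ := dist1 k j' x t' (hx j' hj1' hj2') h'
  have hjj : j ≠ j' := by
    rintro rfl
    rw [hm t' ht' (Ne.symm hne)] at hxt'
    simp at hxt'
  have cdvd : ¬ (4*(k:ℤ)+2) ∣ (2*j' - 2*j) := ndvd k _ (by omega) (by omega) (by omega)
  have cdvd2 : ¬ (4*(k:ℤ)+2) ∣ (2*j - 2*j') := ndvd k _ (by omega) (by omega) (by omega)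
  have c2 : pidx k (2*j) ≠ pidx k (2*j') :=
    fun hcc => cdvd ((pidx_eq_iff k _ _).mp hcc)
  have e1 : pidx k (2*j') = t ∨ pidx k (2*j') = t' := by
    by_contra hcon
    push_neg at hcon
    have hxa : x (pidx k (2*j')) = false := by
      rw [hm _ (even_mem_Sset k hk j j') hcon.1, pv_even k j j' cdvd2]
    have hxb : x (pidx k (2*j')) = true := by
      rw [hm' _ (mem_Sset_one2 k j') hcon.2, pv2]
    rw [hxa] at hxb
    exact Bool.false_ne_true hxb
  have e2 : pidx k (2*j) = t ∨ pidx k (2*j) = t' := by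
    by_contra hcon
    push_neg at hcon
    have hxa : x (pidx k (2*j)) = false := by
      rw [hm' _ (even_mem_Sset k hk j' j) hcon.2, pv_even k j' j cdvd]
    have hxb : x (pidx k (2*j)) = true := by
      rw [hm _ (mem_Sset_one2 k j) hcon.1, pv2]
    rw [hxa] at hxb
    exact Bool.false_ne_true hxb
  have hpar : (∃ a : ℤ, t = pidx k (2*a)) ∧ (∃ a : ℤ, t' = pidx k (2*a)) := by
    rcases e1 with h1 | h1 <;> rcases e2 with h2 | h2
    · exact absurd (h2.trans h1.symm) c2
    · exact ⟨⟨j', h1.symm⟩, ⟨j, h2.symm⟩⟩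
    · exact ⟨⟨j, h2.symm⟩, ⟨j', h1.symm⟩⟩
    · exact absurd (h2.trans h1.symm) c2
  obtain ⟨⟨a, rfl⟩, ⟨a', rfl⟩⟩ := hpar
  have ho1 : x (pidx k (2*j-1)) = true := by
    rw [hm _ (mem_Sset_one1 k j) (pidx_even_ne_odd k a j).symm, pv1]
  have ho1' : x (pidx k (2*j'-1)) = true := by
    rw [hm' _ (mem_Sset_one1 k j') (pidx_even_ne_odd k a' j').symm, pv1]
  rcases odd_tri k hk j' j with hc | ⟨i, hi1, hi2, hc⟩ | ⟨i, hi1, hi2, hc⟩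
  · have hdv := (pidx_eq_iff k _ _).mp hc
    have heq : (2*j'-1) - (2*j-1) = 2*j' - 2*j := by ring
    rw [heq] at hdv
    exact cdvd hdv
  · rcases odd_tri k hk j j' with hc' | ⟨i', hi1', hi2', hc'⟩ | ⟨i', hi1', hi2', hc'⟩
    · have hdv := (pidx_eq_iff k _ _).mp hc'
      have heq : (2*j-1) - (2*j'-1) = 2*j - 2*j' := by ring
      rw [heq] at hdv
      exact cdvd2 hdv
    · have hdv1 := (pidx_eq_iff k _ _).mp hc
      have hdv2 := (pidx_eq_iff k _ _).mp hc'
      have hsum := dvd_add hdv1 hdv2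
      have heq : (2*j'+2*i-1 - (2*j-1)) + (2*j+2*i'-1 - (2*j'-1)) = 2*i + 2*i' := by ring
      rw [heq] at hsum
      have := Int.eq_zero_of_abs_lt_dvd hsum (abs_lt.mpr ⟨by omega, by omega⟩)
      omega
    · have hmem : pidx k (2*j'-1) ∈ Sset k j := by
        rw [hc']; exact mem_Sset_z2 k j i' hi1' hi2'
      have hval : patval k j (pidx k (2*j'-1)) = false := by
        rw [hc']; exact pvz2 k j i' hi1' hi2'
      have hh := hm _ hmem (pidx_even_ne_odd k a j').symm
      rw [hval] at hh
      rw [hh] at ho1'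
      exact Bool.false_ne_true ho1'
  · have hmem : pidx k (2*j-1) ∈ Sset k j' := by
      rw [hc]; exact mem_Sset_z2 k j' i hi1 hi2
    have hval : patval k j' (pidx k (2*j-1)) = false := by
      rw [hc]; exact pvz2 k j' i hi1 hi2
    have hh := hm' _ hmem (pidx_even_ne_odd k a' j).symm
    rw [hval] at hh
    rw [hh] at ho1
    exact Bool.false_ne_true ho1

lemma block_core (k : ℕ) (j : ℤ) (x : Fin (4*k+2) → Bool) (B B' : Finset (Fin (4*k+2)))
    (hd : Disjoint B B') (h : SatPat k j (flipBlock x B)) (h' : SatPat k j (flipBlock x B')) :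
    SatPat k j x := by
  rw [satPat_iff] at h h' ⊢
  intro p hp
  by_cases hB : p ∈ B
  · have hB' : p ∉ B' := fun hB' => Finset.disjoint_left.mp hd hB hB'
    have e1 := h p hp; have e2 := h' p hp
    simp only [flipBlock, if_pos hB] at e1
    simp only [flipBlock, if_neg hB'] at e2
    rw [e2] at e1
    exact absurd e1 (by simp)
  · have := h p hp
    simpa only [flipBlock, if_neg hB] using this

lemma block_hit (k : ℕ) (j : ℤ) (x : Fin (4*k+2) → Bool) (B : Finset (Fin (4*k+2)))
    (h : SatPat k j x) (h2 : ¬ SatPat k j (flipBlock x B)) : ∃ p ∈ B, p ∈ Sset k j := by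
  by_contra hc
  push_neg at hc
  refine h2 (satPat_congr k j _ x (fun p hp => ?_) h)
  simp only [flipBlock]
  rw [if_neg (fun hB => hc p hB hp)]

/-- base 0-input for the sensitivity lower bound -/
def xzero (k : ℕ) : Fin (4*k+2) → Bool := fun p => decide (p = pidx k (2*1))

lemma xzero_no (k : ℕ) : ∀ j : ℤ, ¬ SatPat k j (xzero k) := by
  rintro j ⟨h1, -, -⟩
  simp only [xzero, decide_eq_true_eq] at h1
  exact (pidx_even_ne_odd k 1 j) h1.symm

lemma xzero_flip (k : ℕ) (hk : 1 ≤ k) : SatPat k 1 (flipBit (xzero k) (pidx k (2*1-1))) := by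
  have hne10 : pidx k (2*1) ≠ pidx k (2*1-1) := (pidx_ne k _ _ (by omega) (by omega) (by omega))
  refine ⟨?_, ?_, fun i hi1 hi2 => ⟨?_, ?_, ?_⟩⟩
  · rw [flipBit, Function.update_self]
    simp only [xzero]
    rw [decide_eq_false hne10.symm]
    rfl
  · rw [flipBit, Function.update_of_ne hne10]
    simp [xzero]
  · rw [flipBit, Function.update_of_ne (pidx_ne k _ _ (by omega) (by omega) (by omega))]
    simp only [xzero, decide_eq_false_iff_not]
    exact (pidx_ne k _ _ (by omega) (by omega) (by omega))
  · rw [flipBit, Function.update_of_ne (pidx_ne k _ _ (by omega) (by omega) (by omega))]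
    simp only [xzero, decide_eq_false_iff_not]
    exact (pidx_ne k _ _ (by omega) (by omega) (by omega))
  · rw [flipBit, Function.update_of_ne (pidx_ne k _ _ (by omega) (by omega) (by omega))]
    simp only [xzero, decide_eq_false_iff_not]
    exact (pidx_ne k _ _ (by omega) (by omega) (by omega))

lemma zero_no (k : ℕ) : ∀ j : ℤ, ¬ SatPat k j (fun _ => false) := by
  rintro j ⟨h1, -, -⟩
  exact Bool.false_ne_true h1

section BsGeneric
variable {ι : Type} [Fintype ι] [DecidableEq ι]
set_option linter.unusedSectionVars false

def bsSet (f : (ι → Bool) → Bool) (x : ι → Bool) : Set ℕ :=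
  {b : ℕ | ∃ Bl : Fin b → Finset ι,
    (Pairwise fun p q => Disjoint (Bl p) (Bl q)) ∧
    ∀ p, f (flipBlock x (Bl p)) ≠ f x}

lemma bsSet_zero_mem (f : (ι → Bool) → Bool) (x : ι → Bool) : 0 ∈ bsSet f x :=
  ⟨fun p => p.elim0, fun {p} _ _ => p.elim0, fun p => p.elim0⟩

lemma flipBlock_empty (x : ι → Bool) : flipBlock x (∅ : Finset ι) = x := by
  funext j; simp [flipBlock]

lemma bsSet_le_card (f : (ι → Bool) → Bool) (x : ι → Bool) (b : ℕ) (hb : b ∈ bsSet f x) :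
    b ≤ Fintype.card ι := by
  obtain ⟨Bl, hdisj, hne⟩ := hb
  have hnonempty : ∀ p, (Bl p).Nonempty := by
    intro p
    rcases Finset.eq_empty_or_nonempty (Bl p) with h | h
    · exact absurd (by rw [h, flipBlock_empty]) (hne p)
    · exact h
  have hinj : Function.Injective (fun p => (hnonempty p).choose) := by
    intro p q hpq
    by_contra hne2
    have hpq' : (hnonempty p).choose = (hnonempty q).choose := hpq
    have h2 := (hnonempty q).choose_spec
    rw [← hpq'] at h2
    exact Finset.disjoint_left.mp (hdisj hne2) (hnonempty p).choose_spec h2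
  simpa using Fintype.card_le_of_injective _ hinj

lemma bsSet_bddAbove (f : (ι → Bool) → Bool) (x : ι → Bool) : BddAbove (bsSet f x) :=
  ⟨Fintype.card ι, fun b hb => bsSet_le_card f x b hb⟩

end BsGeneric

section RowLemmas
variable {m n : ℕ}

lemma row_flipBit_ne (X : Fin m × Fin n → Bool) (i i' : Fin m) (t : Fin n) (h : i' ≠ i) :
    (fun j => flipBit X (i, t) (i', j)) = fun j => X (i', j) := by
  funext j
  rw [flipBit, Function.update_of_ne (by simp [Prod.ext_iff]; intro hc; exact absurd hc h)]

lemma row_flipBit_eq (X : Fin m × Fin n → Bool) (i : Fin m) (t : Fin n) :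
    (fun j => flipBit X (i, t) (i, j)) = flipBit (fun j => X (i, j)) t := by
  funext j
  by_cases h : j = t
  · subst h
    rw [flipBit, Function.update_self, flipBit, Function.update_self]
  · rw [flipBit, Function.update_of_ne (by simp [Prod.ext_iff, h]), flipBit,
      Function.update_of_ne h]

lemma row_flipBlock (X : Fin m × Fin n → Bool) (i : Fin m) (B : Finset (Fin m × Fin n)) :
    (fun j => flipBlock X B (i, j)) =
      flipBlock (fun j => X (i, j)) (Finset.univ.filter fun j => (i, j) ∈ B) := by
  funext j
  simp [flipBlock]

end RowLemmas

lemma prod_blockpat (m k : ℕ) (i : Fin m) (U : ℤ) :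
    SatPat k U (fun t => flipBlock (fun _ => false)
      ({(i, pidx k (2*U-1)), (i, pidx k (2*U))} : Finset (Fin m × Fin (4*k+2))) (i, t)) := by
  refine ⟨?_, ?_, fun i' hi1 hi2 => ⟨?_, ?_, ?_⟩⟩
  · show flipBlock _ _ (i, pidx k (2*U-1)) = true
    simp only [flipBlock]
    rw [if_pos (Finset.mem_insert_self _ _)]
    rfl
  · show flipBlock _ _ (i, pidx k (2*U)) = true
    simp only [flipBlock]
    rw [if_pos (Finset.mem_insert_of_mem (Finset.mem_singleton_self _))]
    rfl
  · show flipBlock _ _ (i, pidx k (2*U+2*i')) = false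
    simp only [flipBlock]
    rw [if_neg]
    intro hmem
    rcases Finset.mem_insert.mp hmem with h | h
    · exact (pidx_ne k (2*U+2*i') (2*U-1) (by omega) (by omega) (by omega)) (Prod.ext_iff.mp h).2
    · exact (pidx_ne k (2*U+2*i') (2*U) (by omega) (by omega) (by omega))
        (Prod.ext_iff.mp (Finset.mem_singleton.mp h)).2
  · show flipBlock _ _ (i, pidx k (2*U-2*i'-1)) = false
    simp only [flipBlock]
    rw [if_neg]
    intro hmem
    rcases Finset.mem_insert.mp hmem with h | h
    · exact (pidx_ne k (2*U-2*i'-1) (2*U-1) (by omega) (by omega) (by omega)) (Prod.ext_iff.mp h).2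
    · exact (pidx_ne k (2*U-2*i'-1) (2*U) (by omega) (by omega) (by omega))
        (Prod.ext_iff.mp (Finset.mem_singleton.mp h)).2
  · show flipBlock _ _ (i, pidx k (2*U-2*i')) = false
    simp only [flipBlock]
    rw [if_neg]
    intro hmem
    rcases Finset.mem_insert.mp hmem with h | h
    · exact (pidx_ne k (2*U-2*i') (2*U-1) (by omega) (by omega) (by omega)) (Prod.ext_iff.mp h).2
    · exact (pidx_ne k (2*U-2*i') (2*U) (by omega) (by omega) (by omega))
        (Prod.ext_iff.mp (Finset.mem_singleton.mp h)).2

/-- For `k ≥ 1`, the function `f` on `(3k+2)(4k+2)` variables obtained by taking the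
OR of the pattern function `g` on `3k+2` disjoint blocks of `4k+2` variables has
sensitivity `s(f) = 3k+2` and block sensitivity `bs(f) = (3k+2)(2k+1)`. -/
theorem sens_bs_composed_pattern_function (k : ℕ) (hk : 1 ≤ k)
    (g : (Fin (4*k+2) → Bool) → Bool)
    (hg : ∀ x, g x = true ↔ ∃ j : ℤ, 1 ≤ j ∧ j ≤ 2*(k:ℤ)+1 ∧ SatPat k j x)
    (f : (Fin (3*k+2) × Fin (4*k+2) → Bool) → Bool)
    (hf : ∀ x : Fin (3*k+2) × Fin (4*k+2) → Bool,
      f x = true ↔ ∃ i : Fin (3*k+2), g (fun j => x (i, j)) = true) :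
    sens f = 3*k+2 ∧ bs f = (3*k+2)*(2*k+1) := by
  have hgfalse : ∀ x, g x = false ↔ ∀ j : ℤ, 1 ≤ j → j ≤ 2*(k:ℤ)+1 → ¬ SatPat k j x := by
    intro x
    rw [Bool.eq_false_iff, Ne, hg]
    constructor
    · intro h j h1 h2 hs; exact h ⟨j, h1, h2, hs⟩
    · rintro h ⟨j, h1, h2, hs⟩; exact h j h1 h2 hs
  have hffalse : ∀ X : Fin (3*k+2) × Fin (4*k+2) → Bool,
      f X = false ↔ ∀ i, g (fun j => X (i, j)) = false := by
    intro X
    rw [Bool.eq_false_iff, Ne, hf]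
    constructor
    · intro h i
      rw [Bool.eq_false_iff]
      exact fun hc => h ⟨i, hc⟩
    · rintro h ⟨i, hc⟩
      rw [h i] at hc
      exact Bool.false_ne_true hc
  -- ### sensitivity upper bound
  have sens_upper : ∀ X : Fin (3*k+2) × Fin (4*k+2) → Bool, sensAt f X ≤ 3*k+2 := by
    intro X
    unfold sensAt
    by_cases hX : f X = true
    · obtain ⟨i₀, hgi⟩ := (hf X).mp hX
      obtain ⟨j₀, hj1, hj2, hsat⟩ := (hg _).mp hgi
      have key : ∀ p ∈ (Finset.univ.filter fun p => f (flipBit X p) ≠ f X),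
          p.1 = i₀ ∧ p.2 ∈ Sset k j₀ := by
        rintro ⟨i, t⟩ hp
        rw [Finset.mem_filter] at hp
        have hflip := hp.2
        have hi : i = i₀ := by
          by_contra hii
          apply hflip
          rw [hX, hf]
          refine ⟨i₀, ?_⟩
          rw [row_flipBit_ne X i i₀ t (fun hc => hii hc.symm)]
          exact hgi
        subst hi
        refine ⟨rfl, ?_⟩
        show t ∈ Sset k j₀
        by_contra hts
        apply hflip
        rw [hX, hf]
        refine ⟨i, ?_⟩
        rw [row_flipBit_eq X i t, hg]
        refine ⟨j₀, hj1, hj2, satPat_congr k j₀ _ _ (fun p hp2 => ?_) hsat⟩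
        have hpt : p ≠ t := fun hc => hts (hc ▸ hp2)
        rw [flipBit, Function.update_of_ne hpt]
      calc (Finset.univ.filter fun p => f (flipBit X p) ≠ f X).card ≤ (Sset k j₀).card := by
            apply Finset.card_le_card_of_injOn (fun p => p.2) (fun p hp => (key p hp).2)
            intro p hp q hq hpq
            have hpq' : p.2 = q.2 := hpq
            exact Prod.ext_iff.mpr ⟨(key p hp).1.trans (key q hq).1.symm, hpq'⟩
        _ ≤ 3*k+2 := Sset_card k j₀
    · rw [Bool.not_eq_true] at hX
      have hrow : ∀ i, g (fun j => X (i, j)) = false := (hffalse X).mp hX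
      have key : ∀ (i : Fin (3*k+2)) (t : Fin (4*k+2)), f (flipBit X (i,t)) ≠ f X →
          ∃ j : ℤ, 1 ≤ j ∧ j ≤ 2*(k:ℤ)+1 ∧ SatPat k j (flipBit (fun j' => X (i,j')) t) := by
        intro i t hs
        rw [hX] at hs
        have htrue : f (flipBit X (i,t)) = true := by
          cases hc : f (flipBit X (i,t))
          · exact absurd hc hs
          · rfl
        obtain ⟨i', hgi'⟩ := (hf _).mp htrue
        have hii : i' = i := by
          by_contra hc
          rw [row_flipBit_ne X i i' t hc, hrow i'] at hgi'
          exact Bool.false_ne_true hgi'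
        subst hii
        rw [row_flipBit_eq X i' t] at hgi'
        exact (hg _).mp hgi'
      calc (Finset.univ.filter fun p => f (flipBit X p) ≠ f X).card
          ≤ (Finset.univ : Finset (Fin (3*k+2))).card := by
            apply Finset.card_le_card_of_injOn (fun p => p.1) (fun p _ => Finset.mem_univ _)
            intro p hp q hq hpq
            have hpq' : p.1 = q.1 := hpq
            rw [Finset.coe_filter, Set.mem_setOf_eq] at hp hq
            obtain ⟨j1, hj11, hj12, hs1⟩ := key p.1 p.2 hp.2
            obtain ⟨j2, hj21, hj22, hs2⟩ := key q.1 q.2 hq.2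
            have hx0 : ∀ j : ℤ, 1 ≤ j → j ≤ 2*(k:ℤ)+1 → ¬ SatPat k j (fun j' => X (p.1, j')) :=
              (hgfalse _).mp (hrow p.1)
            have hs2' : SatPat k j2 (flipBit (fun j' => X (p.1, j')) q.2) := by
              rw [hpq']; exact hs2
            have := s0_core k hk (fun j' => X (p.1, j')) hx0 p.2 q.2 j1 j2
              hj11 hj12 hj21 hj22 hs1 hs2'
            exact Prod.ext_iff.mpr ⟨hpq', this⟩
        _ = 3*k+2 := by rw [Finset.card_univ, Fintype.card_fin]
  -- ### sensitivity lower bound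
  have sens_lower : 3*k+2 ≤ sensAt f (fun p => xzero k p.2) := by
    set X0 : Fin (3*k+2) × Fin (4*k+2) → Bool := fun p => xzero k p.2 with hX0
    have hfX0 : f X0 = false :=
      (hffalse X0).mpr (fun i => (hgfalse _).mpr (fun j _ _ => xzero_no k j))
    have hsub : Finset.univ.image (fun i : Fin (3*k+2) => (i, pidx k (2*1-1)))
        ⊆ Finset.univ.filter (fun p => f (flipBit X0 p) ≠ f X0) := by
      intro p hp
      simp only [Finset.mem_image, Finset.mem_univ, true_and] at hp
      obtain ⟨i, rfl⟩ := hp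
      rw [Finset.mem_filter]
      refine ⟨Finset.mem_univ _, ?_⟩
      rw [hfX0]
      simp only [ne_eq, Bool.not_eq_false]
      rw [hf]
      refine ⟨i, ?_⟩
      rw [row_flipBit_eq X0 i (pidx k (2*1-1)), hg]
      exact ⟨1, le_refl 1, by omega, xzero_flip k hk⟩
    unfold sensAt
    calc 3*k+2 = (Finset.univ.image (fun i : Fin (3*k+2) => (i, pidx k (2*1-1)))).card := by
          rw [Finset.card_image_of_injective _ (fun a b hab => (Prod.ext_iff.mp hab).1),
            Finset.card_univ, Fintype.card_fin]
      _ ≤ _ := Finset.card_le_card hsub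
  -- ### block sensitivity upper bound
  have bs_upper : ∀ X : Fin (3*k+2) × Fin (4*k+2) → Bool, bsAt f X ≤ (3*k+2)*(2*k+1) := by
    intro X
    show sSup (bsSet f X) ≤ (3*k+2)*(2*k+1)
    apply csSup_le ⟨0, bsSet_zero_mem f X⟩
    intro b hb
    obtain ⟨Bl, hdisj, hflip⟩ := hb
    by_cases hX : f X = true
    · obtain ⟨i₀, hgi⟩ := (hf X).mp hX
      obtain ⟨j₀, hj1, hj2, hsat⟩ := (hg _).mp hgi
      have hhit : ∀ p : Fin b, ∃ t ∈ (Finset.univ.filter fun t => (i₀, t) ∈ Bl p),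
          t ∈ Sset k j₀ := by
        intro p
        apply block_hit k j₀ _ _ hsat
        intro hcsat
        apply hflip p
        rw [hX, hf]
        refine ⟨i₀, ?_⟩
        rw [row_flipBlock, hg]
        exact ⟨j₀, hj1, hj2, hcsat⟩
      choose tp htp1 htp2 using hhit
      have hinjt : Function.Injective (fun p => (⟨tp p, htp2 p⟩ : {t // t ∈ Sset k j₀})) := by
        intro p q hpq
        by_contra hne2
        have h1 := htp1 p
        have h2 := htp1 q
        rw [Finset.mem_filter] at h1 h2
        have heq : tp p = tp q := congrArg Subtype.val hpq
        rw [heq] at h1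
        exact Finset.disjoint_left.mp (hdisj hne2) h1.2 h2.2
      have hcard := Fintype.card_le_of_injective _ hinjt
      rw [Fintype.card_fin, Fintype.card_coe] at hcard
      calc b ≤ (Sset k j₀).card := hcard
        _ ≤ 3*k+2 := Sset_card k j₀
        _ ≤ (3*k+2)*(2*k+1) := Nat.le_mul_of_pos_right _ (by omega)
    · rw [Bool.not_eq_true] at hX
      have hrow := (hffalse X).mp hX
      have hpat : ∀ p : Fin b, ∃ i : Fin (3*k+2), ∃ j : ℤ, 1 ≤ j ∧ j ≤ 2*(k:ℤ)+1 ∧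
          SatPat k j (flipBlock (fun t => X (i, t))
            (Finset.univ.filter fun t => (i, t) ∈ Bl p)) := by
        intro p
        have hnf := hflip p
        rw [hX] at hnf
        have htrue : f (flipBlock X (Bl p)) = true := by
          cases hc : f (flipBlock X (Bl p))
          · exact absurd hc hnf
          · rfl
        obtain ⟨i, hgi⟩ := (hf _).mp htrue
        rw [row_flipBlock] at hgi
        obtain ⟨j, hj1, hj2, hsat⟩ := (hg _).mp hgi
        exact ⟨i, j, hj1, hj2, hsat⟩
      choose ip jp hjp1 hjp2 hjsat using hpat
      have hinj : Function.Injective (fun p => ((ip p, ⟨jp p,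
          Finset.mem_Icc.mpr ⟨hjp1 p, hjp2 p⟩⟩) :
          Fin (3*k+2) × {j // j ∈ Finset.Icc (1:ℤ) (2*(k:ℤ)+1)})) := by
        intro p q hpq
        by_contra hne2
        rw [Prod.ext_iff] at hpq
        have hi : ip p = ip q := hpq.1
        have hj : jp p = jp q := congrArg Subtype.val hpq.2
        have hdisC : Disjoint (Finset.univ.filter fun t => (ip p, t) ∈ Bl p)
            (Finset.univ.filter fun t => (ip p, t) ∈ Bl q) := by
          rw [Finset.disjoint_left]
          intro t h1 h2
          rw [Finset.mem_filter] at h1 h2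
          exact Finset.disjoint_left.mp (hdisj hne2) h1.2 h2.2
        have hsq := hjsat q
        rw [← hi, ← hj] at hsq
        have hsp := block_core k (jp p) _ _ _ hdisC (hjsat p) hsq
        have hgt : g (fun t => X (ip p, t)) = true := (hg _).mpr ⟨jp p, hjp1 p, hjp2 p, hsp⟩
        rw [hrow (ip p)] at hgt
        exact Bool.false_ne_true hgt
      have hcard := Fintype.card_le_of_injective _ hinj
      rw [Fintype.card_fin, Fintype.card_prod, Fintype.card_fin, Fintype.card_coe] at hcard
      have hIcc : (Finset.Icc (1:ℤ) (2*(k:ℤ)+1)).card = 2*k+1 := by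
        rw [Int.card_Icc]
        omega
      rw [hIcc] at hcard
      exact hcard
  -- ### block sensitivity lower bound
  have bs_lower : (3*k+2)*(2*k+1) ∈ bsSet f (fun _ => false) := by
    set P : Fin (3*k+2) × Fin (2*k+1) → Finset (Fin (3*k+2) × Fin (4*k+2)) :=
      fun q => {(q.1, pidx k (2*((q.2.1:ℤ)+1)-1)), (q.1, pidx k (2*((q.2.1:ℤ)+1)))} with hP
    have hPdis : ∀ a b : Fin (3*k+2) × Fin (2*k+1), a ≠ b → Disjoint (P a) (P b) := by
      rintro ⟨i, u⟩ ⟨i', u'⟩ hne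
      rw [Finset.disjoint_left]
      intro z hz hz'
      simp only [hP, Finset.mem_insert, Finset.mem_singleton] at hz hz'
      have hu := u.isLt
      have hu' := u'.isLt
      have hcontra : i = i' → u = u' → False := by
        intro e1 e2
        exact hne (by rw [Prod.ext_iff]; exact ⟨e1, e2⟩)
      rcases hz with rfl | rfl <;>
        rcases hz' with h | h <;> rw [Prod.ext_iff] at h <;> obtain ⟨h1, h2⟩ := h
      · rw [pidx_eq_iff] at h2
        have := Int.eq_zero_of_abs_lt_dvd h2 (abs_lt.mpr ⟨by omega, by omega⟩)
        exact hcontra h1 (Fin.ext (by omega))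
      · exact (pidx_even_ne_odd k ((u'.1:ℤ)+1) ((u.1:ℤ)+1)) h2.symm
      · exact (pidx_even_ne_odd k ((u.1:ℤ)+1) ((u'.1:ℤ)+1)) h2
      · rw [pidx_eq_iff] at h2
        have := Int.eq_zero_of_abs_lt_dvd h2 (abs_lt.mpr ⟨by omega, by omega⟩)
        exact hcontra h1 (Fin.ext (by omega))
    refine ⟨fun p => P (finProdFinEquiv.symm p), ?_, ?_⟩
    · intro p q hne
      exact hPdis _ _ (fun hc => hne (finProdFinEquiv.symm.injective hc))
    · intro p
      have hfzero : f (fun _ => false) = false :=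
        (hffalse _).mpr fun i => (hgfalse _).mpr fun j _ _ => zero_no k j
      rw [hfzero]
      simp only [ne_eq, Bool.not_eq_false]
      rw [hf]
      set q := finProdFinEquiv.symm p with hq
      refine ⟨q.1, ?_⟩
      rw [hg]
      refine ⟨(q.2.1:ℤ)+1, by omega, by have := q.2.isLt; omega, ?_⟩
      exact prod_blockpat (3*k+2) k q.1 ((q.2.1:ℤ)+1)
  constructor
  · apply le_antisymm
    · exact Finset.sup_le fun X _ => sens_upper X
    · exact le_trans sens_lower (Finset.le_sup (Finset.mem_univ _))
  · apply le_antisymm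
    · exact Finset.sup_le fun X _ => bs_upper X
    · refine le_trans ?_ (Finset.le_sup (Finset.mem_univ (fun _ => false)))
      exact le_csSup (bsSet_bddAbove f _) bs_lower
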